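/- Let G be a graph and let B ∈ ℝ^{(m+3n')×(m+3n')} be the matrix of the (P1) input construction for G, B := [[0, Kᵀ],[K, A]] + k·I. If G is 3-colorable, then there exists a vector d ∈ ℝ^{m+3n'} with d ≥ 0 such that B − Diag(d) is positive semidefinite and rank(B − Diag(d)) ≤ m + 3. -/

import Mathlib

open Matrix

noncomputable section

/-- Unordered pairs of distinct vertices of `Fin N`, represented by ordered pairs
`(i, j)` with `i < j`. -/
abbrev Pairs (N : ℕ) := {p : Fin N × Fin N // p.1 < p.2}

/-- Vertices of the Peeters supergraph: the original vertices together with, for each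
unordered pair `{i,j}` of distinct vertices, four new vertices `a, b, c, d`
(encoded as `(q, 0), (q, 1), (q, 2), (q, 3)`). -/
abbrev PV (N : ℕ) := Fin N ⊕ (Pairs N × Fin 4)

/-- The generating relation for the edges of the Peeters supergraph: the original edges
together with, for each unordered pair `q = {i,j}`, the nine edges
`{i,a}, {i,b}, {a,b}, {j,c}, {j,d}, {c,d}, {a,j}, {i,d}, {b,c}`. -/
def peetersRel (N : ℕ) (G : SimpleGraph (Fin N)) : PV N → PV N → Prop := fun x y =>
  (∃ i j : Fin N, G.Adj i j ∧ x = Sum.inl i ∧ y = Sum.inl j) ∨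
  (∃ q : Pairs N,
    (x = Sum.inl q.val.1 ∧ y = Sum.inr (q, 0)) ∨
    (x = Sum.inl q.val.1 ∧ y = Sum.inr (q, 1)) ∨
    (x = Sum.inr (q, 0) ∧ y = Sum.inr (q, 1)) ∨
    (x = Sum.inl q.val.2 ∧ y = Sum.inr (q, 2)) ∨
    (x = Sum.inl q.val.2 ∧ y = Sum.inr (q, 3)) ∨
    (x = Sum.inr (q, 2) ∧ y = Sum.inr (q, 3)) ∨
    (x = Sum.inr (q, 0) ∧ y = Sum.inl q.val.2) ∨
    (x = Sum.inl q.val.1 ∧ y = Sum.inr (q, 3)) ∨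
    (x = Sum.inr (q, 1) ∧ y = Sum.inr (q, 2)))

/-- The Peeters supergraph `G'` of `G`. -/
def peetersGraph (N : ℕ) (G : SimpleGraph (Fin N)) : SimpleGraph (PV N) :=
  SimpleGraph.fromRel (peetersRel N G)

/-- Row/column indices of the `(P3)` input construction: pairs `(v, μ)` with
`v ∈ V(G')` and `μ ∈ {1,2,3}`. -/
abbrev Idx (N : ℕ) := PV N × Fin 3

/-- The matrix `A` of the `(P3)` input construction:
`A((v,μ),(w,ν)) = 1` if `v = w` and `μ ≠ ν`, and `0` otherwise. -/
def AP3 (N : ℕ) : Matrix (Idx N) (Idx N) ℝ := fun p q =>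
  if p.1 = q.1 ∧ p.2 ≠ q.2 then 1 else 0

/-- `L` fits the edge set `X` of the `(P3)` input construction, i.e. `L` vanishes on
all pairs `{(v,μ),(w,ν)}` with `{v,w} ∈ E(G')` and on all pairs `{(v,μ),(v,ν)}` with
`μ ≠ ν`. -/
def FitsX (N : ℕ) (G : SimpleGraph (Fin N)) (L : Matrix (Idx N) (Idx N) ℝ) : Prop :=
  (∀ p q : Idx N, (peetersGraph N G).Adj p.1 q.1 → L p q = 0) ∧
  (∀ (v : PV N) (μ ν : Fin 3), μ ≠ ν → L (v, μ) (v, ν) = 0)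


/-- Gadget colors: colors of the four gadget vertices given colors `x, y` of `i, j`. -/
def gcol (x y : Fin 3) : Fin 4 → Fin 3 := fun t =>
  if x = y then (match t with | 0 => x+1 | 1 => x+2 | 2 => x+1 | 3 => x+2)
  else (match t with | 0 => -(x+y) | 1 => y | 2 => x | 3 => -(x+y))

/-- Extension of a coloring of `G` to its Peeters supergraph. -/
def pcol (N : ℕ) (c0 : Fin N → Fin 3) : PV N → Fin 3
  | Sum.inl i => c0 i
  | Sum.inr (q, t) => gcol (c0 q.val.1) (c0 q.val.2) t

lemma gcol_facts : ∀ x y : Fin 3,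
    x ≠ gcol x y 0 ∧ x ≠ gcol x y 1 ∧ gcol x y 0 ≠ gcol x y 1 ∧
    y ≠ gcol x y 2 ∧ y ≠ gcol x y 3 ∧ gcol x y 2 ≠ gcol x y 3 ∧
    gcol x y 0 ≠ y ∧ x ≠ gcol x y 3 ∧ gcol x y 1 ≠ gcol x y 2 := by decide

lemma pcol_proper (N : ℕ) (G : SimpleGraph (Fin N)) (c0 : Fin N → Fin 3)
    (h0 : ∀ i j, G.Adj i j → c0 i ≠ c0 j) :
    ∀ u v, (peetersGraph N G).Adj u v → pcol N c0 u ≠ pcol N c0 v := by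
  have key : ∀ u v, peetersRel N G u v → pcol N c0 u ≠ pcol N c0 v := by
    rintro u v (⟨i, j, hij, rfl, rfl⟩ | ⟨q, H⟩)
    · exact h0 i j hij
    · obtain ⟨h1, h2, h3, h4, h5, h6, h7, h8, h9⟩ := gcol_facts (c0 q.val.1) (c0 q.val.2)
      rcases H with ⟨rfl, rfl⟩|⟨rfl, rfl⟩|⟨rfl, rfl⟩|⟨rfl, rfl⟩|⟨rfl, rfl⟩|⟨rfl, rfl⟩|⟨rfl, rfl⟩|⟨rfl, rfl⟩|⟨rfl, rfl⟩ <;>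
        simpa [pcol] using ‹_›
  intro u v hadj
  rw [peetersGraph, SimpleGraph.fromRel_adj] at hadj
  rcases hadj.2 with h | h
  · exact key u v h
  · exact (key v u h).symm


attribute [local instance] Classical.propDecidable

/-- The matrix `A` used in the `(P1)` and `(P2)` input constructions:
`A((v,μ),(w,ν)) = 2` if `{v,w}` is a nonedge of `G'`, `0` if `{v,w} ∈ E(G')`,
`1` if `v = w` and `μ ≠ ν`, and `0` on the diagonal. -/
def AP12 (N : ℕ) (G : SimpleGraph (Fin N)) : Matrix (Idx N) (Idx N) ℝ := fun p q =>
  if p.1 = q.1 then (if p.2 = q.2 then 0 else 1)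
  else if (peetersGraph N G).Adj p.1 q.1 then 0 else 2

/-- The graph `G''` on the `3n'` indices whose edges are the pairs `{(v,μ),(w,ν)}`
with `{v,w}` a nonedge of `G'`. -/
def Gpp (N : ℕ) (G : SimpleGraph (Fin N)) : SimpleGraph (Idx N) where
  Adj p q := p.1 ≠ q.1 ∧ ¬ (peetersGraph N G).Adj p.1 q.1
  symm := ⟨fun p q h => ⟨h.1.symm, fun ha => h.2 ha.symm⟩⟩
  loopless := ⟨fun p h => h.1 rfl⟩

/-- The edges of `G''`, indexing the first block of rows/columns of `B`. -/
abbrev EIdx (N : ℕ) (G : SimpleGraph (Fin N)) := {e : Sym2 (Idx N) // e ∈ (Gpp N G).edgeSet}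

/-- The node-edge incidence matrix `K` of `G''`. -/
def KInc (N : ℕ) (G : SimpleGraph (Fin N)) : Matrix (Idx N) (EIdx N G) ℝ := fun x e =>
  if x ∈ (e : Sym2 (Idx N)) then 1 else 0

/-- `k := 2·(maximum degree of G'') + 1`. -/
def kval (N : ℕ) (G : SimpleGraph (Fin N)) : ℕ := 2 * (Gpp N G).maxDegree + 1

/-- The matrix `B` of the `(P1)` input construction: `[[0, Kᵀ],[K, A]] + k·I`. -/
def BP1 (N : ℕ) (G : SimpleGraph (Fin N)) :
    Matrix (EIdx N G ⊕ Idx N) (EIdx N G ⊕ Idx N) ℝ :=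
  Matrix.fromBlocks 0 (KInc N G)ᵀ (KInc N G) (AP12 N G) + (kval N G : ℝ) • 1

section Construction

variable {N : ℕ} {G : SimpleGraph (Fin N)}

/-- The weight of an edge of `G''`: `1` if the two underlying vertices have the same
color, `2` otherwise. -/
def sOf (col : PV N → Fin 3) (e : Sym2 (Idx N)) : ℝ :=
  if (Sym2.map (fun p => col p.1) e).IsDiag then 1 else 2

lemma sOf_pair (col : PV N → Fin 3) (p q : Idx N) :
    sOf col s(p, q) = if col p.1 = col q.1 then 1 else 2 := by
  simp [sOf, Sym2.map_pair_eq]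

lemma sOf_pos (col : PV N → Fin 3) (e : Sym2 (Idx N)) : 0 < sOf col e := by
  unfold sOf; split <;> norm_num

lemma sOf_le_two (col : PV N → Fin 3) (e : Sym2 (Idx N)) : sOf col e ≤ 2 := by
  unfold sOf; split <;> norm_num

/-- The factor matrix `C` with `B − Diag d = C Cᵀ`. -/
def Cmat (G : SimpleGraph (Fin N)) (col : PV N → Fin 3) :
    Matrix (EIdx N G ⊕ Idx N) (EIdx N G ⊕ Fin 3) ℝ := fun x y =>
  match x, y with
  | Sum.inl e, Sum.inl f => if e = f then (Real.sqrt (sOf col e.val))⁻¹ else 0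
  | Sum.inl _, Sum.inr _ => 0
  | Sum.inr p, Sum.inl e => if p ∈ e.val then Real.sqrt (sOf col e.val) else 0
  | Sum.inr p, Sum.inr μ => if col p.1 = μ then 1 else 0

variable (col : PV N → Fin 3)


lemma sqrt_sOf_ne (e : Sym2 (Idx N)) : Real.sqrt (sOf col e) ≠ 0 :=
  Real.sqrt_ne_zero'.mpr (sOf_pos col e)

lemma sum_ite_left {α : Type*} [Fintype α] (e : α) {inst : ∀ g : α, Decidable (e = g)}
    (a : ℝ) (h : α → ℝ) :
    ∑ g : α, (@ite ℝ (e = g) (inst g) a 0) * h g = a * h e := by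
  rw [Finset.sum_eq_single e (fun g _ hg => by rw [if_neg (fun hh => hg hh.symm), zero_mul])
    (fun h => absurd (Finset.mem_univ e) h), if_pos rfl]

lemma sum_ite_ite {α : Type*} [Fintype α] (e f : α)
    {inst1 : ∀ g : α, Decidable (e = g)} {inst2 : ∀ g : α, Decidable (f = g)}
    (a b : ℝ) :
    ∑ g : α, (@ite ℝ (e = g) (inst1 g) a 0) * (@ite ℝ (f = g) (inst2 g) b 0) =
      if e = f then a * b else 0 := by
  rw [Finset.sum_eq_single e (fun g _ hg => by rw [if_neg (fun hh => hg hh.symm), zero_mul])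
    (fun h => absurd (Finset.mem_univ e) h), if_pos rfl]
  by_cases h : e = f
  · rw [if_pos (h ▸ rfl : f = e), if_pos h]
  · rw [if_neg (fun hh : f = e => h hh.symm), mul_zero, if_neg h]

lemma gram_ll (e f : EIdx N G) :
    (Cmat G col * (Cmat G col)ᵀ) (Sum.inl e) (Sum.inl f) =
      if e = f then (sOf col e.val)⁻¹ else 0 := by
  rw [Matrix.mul_apply, Fintype.sum_sum_type]
  have h2 : ∀ μ : Fin 3, Cmat G col (Sum.inl e) (Sum.inr μ) *
      (Cmat G col)ᵀ (Sum.inr μ) (Sum.inl f) = 0 := by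
    intro μ; simp [Cmat, Matrix.transpose_apply]
  rw [Finset.sum_congr rfl (fun μ _ => h2 μ), Finset.sum_const, smul_zero, add_zero]
  have h1 : ∀ g : EIdx N G, Cmat G col (Sum.inl e) (Sum.inl g) *
      (Cmat G col)ᵀ (Sum.inl g) (Sum.inl f) =
      (if e = g then (Real.sqrt (sOf col e.val))⁻¹ else 0) *
      (if f = g then (Real.sqrt (sOf col f.val))⁻¹ else 0) := fun g => rfl
  refine (Finset.sum_congr rfl (fun g _ => h1 g)).trans
    ((sum_ite_ite e f ((Real.sqrt (sOf col e.val))⁻¹) ((Real.sqrt (sOf col f.val))⁻¹)).trans ?_)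
  by_cases hef : e = f
  · subst hef
    rw [if_pos rfl, if_pos rfl, ← mul_inv, Real.mul_self_sqrt (sOf_pos col e.val).le]
  · rw [if_neg hef, if_neg hef]

lemma gram_lr (e : EIdx N G) (p : Idx N) :
    (Cmat G col * (Cmat G col)ᵀ) (Sum.inl e) (Sum.inr p) = KInc N G p e := by
  rw [Matrix.mul_apply, Fintype.sum_sum_type]
  have h2 : ∀ μ : Fin 3, Cmat G col (Sum.inl e) (Sum.inr μ) *
      (Cmat G col)ᵀ (Sum.inr μ) (Sum.inr p) = 0 := by
    intro μ; simp [Cmat, Matrix.transpose_apply]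
  rw [Finset.sum_congr rfl (fun μ _ => h2 μ), Finset.sum_const, smul_zero, add_zero]
  have h1 : ∀ g : EIdx N G, Cmat G col (Sum.inl e) (Sum.inl g) *
      (Cmat G col)ᵀ (Sum.inl g) (Sum.inr p) =
      (if e = g then (Real.sqrt (sOf col e.val))⁻¹ else 0) *
      (if p ∈ g.val then Real.sqrt (sOf col g.val) else 0) := fun g => rfl
  refine (Finset.sum_congr rfl (fun g _ => h1 g)).trans
    ((sum_ite_left e ((Real.sqrt (sOf col e.val))⁻¹)
      (fun g : EIdx N G => if p ∈ g.val then Real.sqrt (sOf col g.val) else 0)).trans ?_)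
  rw [KInc]
  by_cases hp : p ∈ e.val
  · rw [if_pos hp, if_pos hp, inv_mul_cancel₀ (sqrt_sOf_ne col e.val)]
  · rw [if_neg hp, if_neg hp, mul_zero]

lemma gram_symm (x y : EIdx N G ⊕ Idx N) :
    (Cmat G col * (Cmat G col)ᵀ) x y = (Cmat G col * (Cmat G col)ᵀ) y x := by
  have h : (Cmat G col * (Cmat G col)ᵀ)ᵀ = Cmat G col * (Cmat G col)ᵀ := by
    rw [Matrix.transpose_mul, Matrix.transpose_transpose]
  conv_lhs => rw [← h]
  exact Matrix.transpose_apply _ _ _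

lemma gram_rr (p q : Idx N) :
    (Cmat G col * (Cmat G col)ᵀ) (Sum.inr p) (Sum.inr q) =
      (∑ g : EIdx N G, (if p ∈ g.val then Real.sqrt (sOf col g.val) else 0) *
        (if q ∈ g.val then Real.sqrt (sOf col g.val) else 0)) +
      (if col p.1 = col q.1 then 1 else 0) := by
  rw [Matrix.mul_apply, Fintype.sum_sum_type]
  congr 1
  have h2 : ∀ μ : Fin 3, Cmat G col (Sum.inr p) (Sum.inr μ) *
      (Cmat G col)ᵀ (Sum.inr μ) (Sum.inr q) =
      (if col p.1 = μ then (1:ℝ) else 0) * (if col q.1 = μ then (1:ℝ) else 0) := fun μ => rfl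
  refine (Finset.sum_congr rfl (fun μ _ => h2 μ)).trans
    ((sum_ite_ite (col p.1) (col q.1) (1:ℝ) (1:ℝ)).trans ?_)
  by_cases h : col p.1 = col q.1
  · rw [if_pos h, if_pos h, mul_one]
  · rw [if_neg h, if_neg h]

lemma gram_rr_off (Hcol : ∀ u v, (peetersGraph N G).Adj u v → col u ≠ col v)
    (p q : Idx N) (hpq : p ≠ q) :
    (Cmat G col * (Cmat G col)ᵀ) (Sum.inr p) (Sum.inr q) = AP12 N G p q := by
  rw [gram_rr]
  by_cases hadj : (Gpp N G).Adj p q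
  · have he : s(p, q) ∈ (Gpp N G).edgeSet := (Gpp N G).mem_edgeSet.2 hadj
    have hsum : ∑ g : EIdx N G, (if p ∈ g.val then Real.sqrt (sOf col g.val) else 0) *
        (if q ∈ g.val then Real.sqrt (sOf col g.val) else 0) = sOf col s(p, q) := by
      rw [Finset.sum_eq_single (⟨s(p,q), he⟩ : EIdx N G)]
      · rw [if_pos (Sym2.mem_mk_left p q), if_pos (Sym2.mem_mk_right p q),
          Real.mul_self_sqrt (sOf_pos col _).le]
      · intro g _ hg
        by_cases h1 : p ∈ g.val
        · by_cases h2 : q ∈ g.val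
          · exact absurd (Subtype.ext ((Sym2.mem_and_mem_iff hpq).1 ⟨h1, h2⟩)) hg
          · rw [if_neg h2, mul_zero]
        · rw [if_neg h1, zero_mul]
      · intro h; exact absurd (Finset.mem_univ _) h
    rw [hsum, sOf_pair, AP12, if_neg hadj.1, if_neg hadj.2]
    by_cases h : col p.1 = col q.1
    · rw [if_pos h, if_pos h]; norm_num
    · rw [if_neg h, if_neg h]; norm_num
  · have hsum : ∑ g : EIdx N G, (if p ∈ g.val then Real.sqrt (sOf col g.val) else 0) *
        (if q ∈ g.val then Real.sqrt (sOf col g.val) else 0) = 0 := by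
      apply Finset.sum_eq_zero
      intro g _
      by_cases h1 : p ∈ g.val
      · by_cases h2 : q ∈ g.val
        · exfalso
          have : g.val = s(p, q) := (Sym2.mem_and_mem_iff hpq).1 ⟨h1, h2⟩
          exact hadj ((Gpp N G).mem_edgeSet.1 (this ▸ g.2))
        · rw [if_neg h2, mul_zero]
      · rw [if_neg h1, zero_mul]
    rw [hsum, zero_add, AP12]
    by_cases hv : p.1 = q.1
    · have hμ : p.2 ≠ q.2 := fun h => hpq (Prod.ext hv h)
      rw [if_pos hv, if_neg hμ, if_pos (congrArg col hv)]
    · have hadj' : (peetersGraph N G).Adj p.1 q.1 := by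
        by_contra hc
        exact hadj ⟨hv, hc⟩
      rw [if_neg hv, if_pos hadj', if_neg (Hcol _ _ hadj')]

lemma one_le_sOf (e : Sym2 (Idx N)) : 1 ≤ sOf col e := by
  unfold sOf; split <;> norm_num

lemma one_le_kval : (1 : ℝ) ≤ (kval N G : ℝ) := by
  have : 1 ≤ kval N G := Nat.le_add_left 1 _
  exact_mod_cast this

lemma sum_ite_const {α : Type*} [Fintype α] (P : α → Prop) {inst : ∀ g, Decidable (P g)}
    (c : ℝ) :
    ∑ g : α, (@ite ℝ (P g) (inst g) c 0) =
      ((@Finset.filter α P inst Finset.univ).card : ℝ) * c := by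
  rw [← Finset.sum_filter, Finset.sum_const, nsmul_eq_mul]

lemma card_filter_eq_degree (p : Idx N)
    {inst : DecidablePred (fun g : EIdx N G => p ∈ g.val)} :
    (@Finset.filter _ (fun g : EIdx N G => p ∈ g.val) inst Finset.univ).card
      = (Gpp N G).degree p := by
  rw [← SimpleGraph.card_incidenceFinset_eq_degree]
  apply Finset.card_bij (fun g _ => g.val)
  · intro g hg
    rw [SimpleGraph.mem_incidenceFinset]
    exact ⟨g.2, (Finset.mem_filter.1 hg).2⟩
  · intro g1 h1 g2 h2 h
    exact Subtype.ext h
  · intro e he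
    rw [SimpleGraph.mem_incidenceFinset] at he
    exact ⟨⟨e, he.1⟩, Finset.mem_filter.2 ⟨Finset.mem_univ _, he.2⟩, rfl⟩

lemma gram_diag_le (x : EIdx N G ⊕ Idx N) :
    (Cmat G col * (Cmat G col)ᵀ) x x ≤ (kval N G : ℝ) := by
  cases x with
  | inl e =>
    rw [gram_ll, if_pos rfl]
    have h1 : (sOf col e.val)⁻¹ ≤ 1 := by
      rw [inv_le_one_iff₀]; right; exact one_le_sOf col e.val
    exact h1.trans (one_le_kval)
  | inr p =>
    rw [gram_rr, if_pos rfl]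
    have hterm : ∀ g : EIdx N G,
        (if p ∈ g.val then Real.sqrt (sOf col g.val) else 0) *
        (if p ∈ g.val then Real.sqrt (sOf col g.val) else 0) ≤
        (if p ∈ g.val then (2:ℝ) else 0) := by
      intro g
      by_cases h : p ∈ g.val
      · rw [if_pos h, if_pos h, Real.mul_self_sqrt (sOf_pos col g.val).le]
        exact sOf_le_two col g.val
      · rw [if_neg h, if_neg h, mul_zero]
    have hsum : (∑ g : EIdx N G, (if p ∈ g.val then Real.sqrt (sOf col g.val) else 0) *
        (if p ∈ g.val then Real.sqrt (sOf col g.val) else 0)) ≤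
        ∑ g : EIdx N G, (if p ∈ g.val then (2:ℝ) else 0) :=
      Finset.sum_le_sum (fun g _ => hterm g)
    have hsum2 : (∑ g : EIdx N G, (if p ∈ g.val then (2:ℝ) else 0)) =
        2 * ((Gpp N G).degree p : ℝ) := by
      refine (sum_ite_const (fun g : EIdx N G => p ∈ g.val) 2).trans ?_
      rw [card_filter_eq_degree, mul_comm]
    have hdeg : ((Gpp N G).degree p : ℝ) ≤ ((Gpp N G).maxDegree : ℝ) := by
      exact_mod_cast (Gpp N G).degree_le_maxDegree p
    have hk : (kval N G : ℝ) = 2 * ((Gpp N G).maxDegree : ℝ) + 1 := by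
      unfold kval; push_cast; ring
    rw [hk]
    nlinarith [hsum, hsum2, hdeg]

lemma BP1_diag (x : EIdx N G ⊕ Idx N) : BP1 N G x x = (kval N G : ℝ) := by
  cases x with
  | inl e => simp [BP1, Matrix.fromBlocks, Matrix.one_apply]
  | inr p => simp [BP1, Matrix.fromBlocks, AP12, Matrix.one_apply]

end Construction

lemma BP1_off (x y : EIdx N G ⊕ Idx N) (h : x ≠ y) :
    BP1 N G x y = Matrix.fromBlocks 0 (KInc N G)ᵀ (KInc N G) (AP12 N G) x y := by
  rw [BP1, Matrix.add_apply, Matrix.smul_apply, Matrix.one_apply_ne h, smul_zero, add_zero]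


/-- If `G` is 3-colorable, then there is a nonnegative `d` with
`B − Diag(d) ⪰ 0` and `rank (B − Diag(d)) ≤ m + 3`. -/
theorem stmt11 (N : ℕ) (G : SimpleGraph (Fin N)) (hG : G.Colorable 3) :
    ∃ d : EIdx N G ⊕ Idx N → ℝ, (∀ x, 0 ≤ d x) ∧
      (BP1 N G - Matrix.diagonal d).PosSemidef ∧
      (BP1 N G - Matrix.diagonal d).rank ≤ Fintype.card (EIdx N G) + 3 := by
  obtain ⟨c0⟩ := hG
  set col : PV N → Fin 3 := pcol N (fun i => c0 i) with hcol
  have Hcol : ∀ u v, (peetersGraph N G).Adj u v → col u ≠ col v :=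
    pcol_proper N G (fun i => c0 i) (fun i j h => c0.valid h)
  set M : Matrix (EIdx N G ⊕ Idx N) (EIdx N G ⊕ Idx N) ℝ :=
    Cmat G col * (Cmat G col)ᵀ with hMdef
  have hBM : BP1 N G - Matrix.diagonal (fun x => (kval N G : ℝ) - M x x) = M := by
    ext x y
    by_cases hxy : x = y
    · subst hxy
      rw [Matrix.sub_apply, Matrix.diagonal_apply_eq, BP1_diag]
      ring
    · rw [Matrix.sub_apply, Matrix.diagonal_apply_ne _ hxy, sub_zero, BP1_off x y hxy]
      cases x with
      | inl e =>
        cases y with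
        | inl f =>
          have hef : e ≠ f := fun h => hxy (congrArg Sum.inl h)
          rw [Matrix.fromBlocks_apply₁₁, hMdef, gram_ll, if_neg hef, Matrix.zero_apply]
        | inr p =>
          rw [Matrix.fromBlocks_apply₁₂, hMdef, gram_lr, Matrix.transpose_apply]
      | inr p =>
        cases y with
        | inl e =>
          rw [Matrix.fromBlocks_apply₂₁, hMdef, gram_symm, gram_lr]
        | inr q =>
          have hpq : p ≠ q := fun h => hxy (congrArg Sum.inr h)
          rw [Matrix.fromBlocks_apply₂₂, hMdef, gram_rr_off col Hcol p q hpq]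
  refine ⟨fun x => (kval N G : ℝ) - M x x, ?_, ?_, ?_⟩
  · intro x
    have h := gram_diag_le col x
    rw [← hMdef] at h
    show 0 ≤ (kval N G : ℝ) - M x x
    linarith
  · rw [hBM]
    have hpsd := Matrix.posSemidef_self_mul_conjTranspose (Cmat G col)
    rw [Matrix.conjTranspose_eq_transpose_of_trivial] at hpsd
    exact hpsd
  · rw [hBM]
    calc M.rank ≤ (Cmat G col).rank := Matrix.rank_mul_le_left _ _
      _ ≤ Fintype.card (EIdx N G ⊕ Fin 3) := Matrix.rank_le_card_width _
      _ = Fintype.card (EIdx N G) + 3 := by rw [Fintype.card_sum, Fintype.card_fin]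


end
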